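/- Suppose the constraints are linear and homogeneous with time-independent coefficients: α_ν(q,v,t) = ∑_{r=1}^m a_{ν,r}(q) v_r with a_{ν,r} C², and suppose the Lagrangian is time-independent: (∂L/∂t)(q,u,t) = 0 for all (q,u,t). Then ᾱ_ν = α_ν for every ν, and along every C² curve satisfying the constraints and solving the Voronec equations the energy E*(q(t),v(t),t) is constant in t. -/

import Mathlib

open scoped BigOperators
noncomputable section
namespace NH

/-- The phase point `(q, v, t)` with `q : ℝⁿ` (n = m+k) and independent velocities `v : ℝᵐ`. -/
abbrev Pt (m k : ℕ) : Type := (Fin (m+k) → ℝ) × (Fin m → ℝ) × ℝ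

/-- The full phase point `(q, u, t)` with all velocities `u : ℝⁿ`. -/
abbrev PtL (m k : ℕ) : Type := (Fin (m+k) → ℝ) × (Fin (m+k) → ℝ) × ℝ

/-- Partial derivative of `f (q, w, t)` with respect to `q_i`. -/
def pq {n m' : ℕ} (f : (Fin n → ℝ) × (Fin m' → ℝ) × ℝ → ℝ) (i : Fin n)
    (x : (Fin n → ℝ) × (Fin m' → ℝ) × ℝ) : ℝ :=
  fderiv ℝ f x (Pi.single i 1, 0, 0)

/-- Partial derivative of `f (q, w, t)` with respect to the velocity variable `w_j`. -/
def pv {n m' : ℕ} (f : (Fin n → ℝ) × (Fin m' → ℝ) × ℝ → ℝ) (j : Fin m')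
    (x : (Fin n → ℝ) × (Fin m' → ℝ) × ℝ) : ℝ :=
  fderiv ℝ f x (0, Pi.single j 1, 0)

/-- Partial derivative of `f (q, w, t)` with respect to time `t`. -/
def pt {n m' : ℕ} (f : (Fin n → ℝ) × (Fin m' → ℝ) × ℝ → ℝ)
    (x : (Fin n → ℝ) × (Fin m' → ℝ) × ℝ) : ℝ :=
  fderiv ℝ f x (0, 0, 1)

/-- Partial derivative of `U (q, t)` with respect to `q_i`. -/
def pUq {n : ℕ} (U : (Fin n → ℝ) × ℝ → ℝ) (i : Fin n) (x : (Fin n → ℝ) × ℝ) : ℝ :=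
  fderiv ℝ U x (Pi.single i 1, 0)

/-- Partial derivative of `U (q, t)` with respect to `t`. -/
def pUt {n : ℕ} (U : (Fin n → ℝ) × ℝ → ℝ) (x : (Fin n → ℝ) × ℝ) : ℝ :=
  fderiv ℝ U x (0, 1)

variable {m k : ℕ}

/-- `û(q,v,t) = (v₁,…,vₘ, α₁(q,v,t),…,α_k(q,v,t))`. -/
def uhat (α : Fin k → Pt m k → ℝ) (x : Pt m k) : Fin (m+k) → ℝ :=
  Fin.append x.2.1 (fun ν => α ν x)

/-- The full phase point `(q, û(q,v,t), t)` associated to `(q,v,t)`. -/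
def Lpt (α : Fin k → Pt m k → ℝ) (x : Pt m k) : PtL m k :=
  (x.1, uhat α x, x.2.2)

/-- The restricted Lagrangian `L*(q,v,t) = L(q, û(q,v,t), t)`. -/
def Lstar (L : PtL m k → ℝ) (α : Fin k → Pt m k → ℝ) (x : Pt m k) : ℝ :=
  L (Lpt α x)

/-- `ᾱ_ν(q,v,t) = ∑_r v_r ∂α_ν/∂v_r`. -/
def abar (α : Fin k → Pt m k → ℝ) (ν : Fin k) (x : Pt m k) : ℝ :=
  ∑ r : Fin m, x.2.1 r * pv (α ν) r x

/-- The restricted energy `E*(q,v,t) = ∑_r v_r ∂L*/∂v_r − L*`. -/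
def Estar (L : PtL m k → ℝ) (α : Fin k → Pt m k → ℝ) (x : Pt m k) : ℝ :=
  ∑ r : Fin m, x.2.1 r * pv (Lstar L α) r x - Lstar L α x

/-- The energy `E(q,v,t) = ∑_i û_i (∂L/∂u_i)(q,û,t) − L*(q,v,t)`. -/
def En (L : PtL m k → ℝ) (α : Fin k → Pt m k → ℝ) (x : Pt m k) : ℝ :=
  ∑ i : Fin (m+k), uhat α x i * pv L i (Lpt α x) - Lstar L α x

/-- `q̇_i(t)`. -/
def qdot {n : ℕ} (q : ℝ → Fin n → ℝ) (t : ℝ) (i : Fin n) : ℝ :=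
  deriv (fun s => q s i) t

/-- The independent velocities `v(t) = (q̇₁,…,q̇ₘ)` along a curve. -/
def vel (m k : ℕ) (q : ℝ → Fin (m+k) → ℝ) (t : ℝ) (r : Fin m) : ℝ :=
  qdot q t (Fin.castAdd k r)

/-- The point `(q(t), v(t), t)` along a curve. -/
def along (m k : ℕ) (q : ℝ → Fin (m+k) → ℝ) (t : ℝ) : Pt m k :=
  (q t, vel m k q t, t)

/-- The curve satisfies the nonholonomic constraints: `q̇_{m+ν} = α_ν(q, v, t)`. -/
def Constrained (α : Fin k → Pt m k → ℝ) (q : ℝ → Fin (m+k) → ℝ) : Prop :=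
  ∀ (t : ℝ) (ν : Fin k), qdot q t (Fin.natAdd m ν) = α ν (along m k q t)

/-- The Voronec coefficients `B_rν(t)` along a constrained curve. -/
def Bco (α : Fin k → Pt m k → ℝ) (q : ℝ → Fin (m+k) → ℝ) (r : Fin m) (ν : Fin k) (t : ℝ) : ℝ :=
  deriv (fun s => pv (α ν) r (along m k q s)) t
    - pq (α ν) (Fin.castAdd k r) (along m k q t)
    - ∑ μ : Fin k, pv (α μ) r (along m k q t) * pq (α ν) (Fin.natAdd m μ) (along m k q t)

/-- The Voronec equations of motion along a constrained curve. -/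
def Voronec (L : PtL m k → ℝ) (α : Fin k → Pt m k → ℝ) (q : ℝ → Fin (m+k) → ℝ) : Prop :=
  ∀ (r : Fin m) (t : ℝ),
    deriv (fun s => pv (Lstar L α) r (along m k q s)) t
      - pq (Lstar L α) (Fin.castAdd k r) (along m k q t)
      - ∑ ν : Fin k, pq (Lstar L α) (Fin.natAdd m ν) (along m k q t) * pv (α ν) r (along m k q t)
      - ∑ ν : Fin k, Bco α q r ν t * pv L (Fin.natAdd m ν) (Lpt α (along m k q t)) = 0

lemma clm_pi_decomp {n : ℕ} (φ : (Fin n → ℝ) →L[ℝ] ℝ) (w : Fin n → ℝ) :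
    φ w = ∑ i, w i * φ (Pi.single i 1) := by
  conv_lhs => rw [← Finset.univ_sum_single w]
  rw [map_sum]
  refine Finset.sum_congr rfl fun i _ => ?_
  have : (Pi.single i (w i) : Fin n → ℝ) = w i • (Pi.single i (1:ℝ) : Fin n → ℝ) := by
    rw [← Pi.single_smul, smul_eq_mul, mul_one]
  rw [this, map_smul, smul_eq_mul]

lemma clm_decomp {n m' : ℕ} (φ : ((Fin n → ℝ) × (Fin m' → ℝ) × ℝ) →L[ℝ] ℝ)
    (w : Fin n → ℝ) (z : Fin m' → ℝ) (s : ℝ) :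
    φ (w, z, s) = ∑ i, w i * φ (Pi.single i 1, 0, 0)
      + ∑ j, z j * φ (0, Pi.single j 1, 0) + s * φ (0, 0, 1) := by
  have h : (w, z, s) = ((w, 0, 0) + ((0:Fin n → ℝ), z, (0:ℝ)) + ((0:Fin n → ℝ), (0:Fin m' → ℝ), s) :
      (Fin n → ℝ) × (Fin m' → ℝ) × ℝ) := by
    simp [Prod.ext_iff]
  rw [h, map_add, map_add]
  congr 1
  · congr 1
    · have := clm_pi_decomp (φ.comp (ContinuousLinearMap.inl ℝ (Fin n → ℝ) ((Fin m' → ℝ) × ℝ))) w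
      simp at this; exact this
    · have := clm_pi_decomp (φ.comp ((ContinuousLinearMap.inr ℝ (Fin n → ℝ) ((Fin m' → ℝ) × ℝ)).comp
        (ContinuousLinearMap.inl ℝ (Fin m' → ℝ) ℝ))) z
      simpa using this
  · have : ((0:Fin n → ℝ), (0:Fin m' → ℝ), s) = s • ((0:Fin n → ℝ), (0:Fin m' → ℝ), (1:ℝ)) := by
      simp
    rw [this, map_smul, smul_eq_mul]

section alphalem
variable {m k : ℕ}

lemma alpha_fderiv_apply (α : Fin k → Pt m k → ℝ)
    (a : Fin k → Fin m → (Fin (m+k) → ℝ) → ℝ) (ha : ∀ ν r, ContDiff ℝ 2 (a ν r))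
    (hαdef : ∀ (ν : Fin k) (x : Pt m k), α ν x = ∑ r : Fin m, a ν r x.1 * x.2.1 r)
    (ν : Fin k) (x : Pt m k) (e : (Fin (m+k) → ℝ) × (Fin m → ℝ) × ℝ) :
    fderiv ℝ (α ν) x e
      = ∑ r : Fin m, (a ν r x.1 * e.2.1 r + x.2.1 r * fderiv ℝ (a ν r) x.1 e.1) := by
  have hαfun : α ν = fun y : Pt m k => ∑ r : Fin m, a ν r y.1 * y.2.1 r := funext (hαdef ν)
  set Cb : Fin m → (Pt m k →L[ℝ] ℝ) := fun r =>
    (ContinuousLinearMap.proj r).comp ((ContinuousLinearMap.fst ℝ (Fin m → ℝ) ℝ).comp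
      (ContinuousLinearMap.snd ℝ (Fin (m+k) → ℝ) ((Fin m → ℝ) × ℝ))) with hCb
  have hfa : ∀ r : Fin m, HasFDerivAt (fun y : Pt m k => a ν r y.1)
      ((fderiv ℝ (a ν r) x.1).comp (ContinuousLinearMap.fst ℝ (Fin (m+k) → ℝ) ((Fin m → ℝ) × ℝ))) x :=
    fun r => (((ha ν r).differentiable two_ne_zero).differentiableAt.hasFDerivAt).comp x hasFDerivAt_fst
  have hfb : ∀ r : Fin m, HasFDerivAt (fun y : Pt m k => y.2.1 r) (Cb r) x :=
    fun r => (Cb r).hasFDerivAt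
  have hsum : HasFDerivAt (fun y : Pt m k => ∑ r : Fin m, a ν r y.1 * y.2.1 r)
      (∑ r : Fin m, (a ν r x.1 • Cb r + x.2.1 r •
        ((fderiv ℝ (a ν r) x.1).comp (ContinuousLinearMap.fst ℝ (Fin (m+k) → ℝ) ((Fin m → ℝ) × ℝ))))) x :=
    HasFDerivAt.fun_sum fun r _ => (hfa r).mul (hfb r)
  rw [hαfun, hsum.fderiv]
  simp [hCb, ContinuousLinearMap.sum_apply, mul_comm]

lemma alpha_pv (α : Fin k → Pt m k → ℝ)
    (a : Fin k → Fin m → (Fin (m+k) → ℝ) → ℝ) (ha : ∀ ν r, ContDiff ℝ 2 (a ν r))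
    (hαdef : ∀ (ν : Fin k) (x : Pt m k), α ν x = ∑ r : Fin m, a ν r x.1 * x.2.1 r)
    (ν : Fin k) (r : Fin m) (x : Pt m k) :
    pv (α ν) r x = a ν r x.1 := by
  rw [pv, alpha_fderiv_apply α a ha hαdef]
  simp [Pi.single_apply]

lemma alpha_pq (α : Fin k → Pt m k → ℝ)
    (a : Fin k → Fin m → (Fin (m+k) → ℝ) → ℝ) (ha : ∀ ν r, ContDiff ℝ 2 (a ν r))
    (hαdef : ∀ (ν : Fin k) (x : Pt m k), α ν x = ∑ r : Fin m, a ν r x.1 * x.2.1 r)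
    (ν : Fin k) (i : Fin (m+k)) (x : Pt m k) :
    pq (α ν) i x = ∑ r : Fin m, x.2.1 r * fderiv ℝ (a ν r) x.1 (Pi.single i 1) := by
  rw [pq, alpha_fderiv_apply α a ha hαdef]
  simp

lemma alpha_pt (α : Fin k → Pt m k → ℝ)
    (a : Fin k → Fin m → (Fin (m+k) → ℝ) → ℝ) (ha : ∀ ν r, ContDiff ℝ 2 (a ν r))
    (hαdef : ∀ (ν : Fin k) (x : Pt m k), α ν x = ∑ r : Fin m, a ν r x.1 * x.2.1 r)
    (ν : Fin k) (x : Pt m k) :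
    pt (α ν) x = 0 := by
  rw [pt, alpha_fderiv_apply α a ha hαdef]
  simp

end alphalem

section smooth
variable {m k : ℕ}

lemma uhat_contDiff (α : Fin k → Pt m k → ℝ) (hα : ∀ ν, ContDiff ℝ 2 (α ν)) :
    ContDiff ℝ 2 (uhat α) := by
  rw [contDiff_pi]
  intro i
  induction i using Fin.addCases with
  | left r =>
      simp only [uhat, Fin.append_left]
      exact contDiff_pi.mp (contDiff_fst.comp contDiff_snd) r
  | right ν =>
      simp only [uhat, Fin.append_right]
      exact hα ν

lemma Lpt_contDiff (α : Fin k → Pt m k → ℝ) (hα : ∀ ν, ContDiff ℝ 2 (α ν)) :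
    ContDiff ℝ 2 (Lpt α) :=
  ContDiff.prodMk contDiff_fst ((uhat_contDiff α hα).prodMk (contDiff_snd.comp contDiff_snd))

lemma Lstar_contDiff (L : PtL m k → ℝ) (hL : ContDiff ℝ 2 L)
    (α : Fin k → Pt m k → ℝ) (hα : ∀ ν, ContDiff ℝ 2 (α ν)) :
    ContDiff ℝ 2 (Lstar L α) :=
  hL.comp (Lpt_contDiff α hα)

lemma contDiff_one_fderiv_apply {E : Type*} [NormedAddCommGroup E] [NormedSpace ℝ E]
    (f : E → ℝ) (hf : ContDiff ℝ 2 f) (e : E) :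
    ContDiff ℝ 1 (fun x => fderiv ℝ f x e) :=
  (hf.fderiv_right (by norm_num)).clm_apply contDiff_const

lemma vel_contDiff (q : ℝ → Fin (m+k) → ℝ) (hq : ContDiff ℝ 2 q) :
    ContDiff ℝ 1 (vel m k q) := by
  rw [contDiff_pi]
  intro r
  have h2 : ContDiff ℝ 2 (fun s => q s (Fin.castAdd k r)) := contDiff_pi.mp hq _
  have := (contDiff_succ_iff_deriv (n := 1)).mp (by exact_mod_cast h2)
  exact this.2.2

lemma hasDerivAt_q (q : ℝ → Fin (m+k) → ℝ) (hq : ContDiff ℝ 2 q) (t : ℝ) :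
    HasDerivAt q (qdot q t) t :=
  hasDerivAt_pi.mpr fun i =>
    ((contDiff_pi.mp hq i).differentiable two_ne_zero).differentiableAt.hasDerivAt

lemma hasDerivAt_along (q : ℝ → Fin (m+k) → ℝ) (hq : ContDiff ℝ 2 q) (t : ℝ) :
    HasDerivAt (along m k q)
      (qdot q t, (fun r => deriv (fun s => vel m k q s r) t), 1) t := by
  refine (hasDerivAt_q q hq t).prodMk (HasDerivAt.prodMk ?_ (hasDerivAt_id t))
  exact hasDerivAt_pi.mpr fun r =>
    ((contDiff_pi.mp (vel_contDiff q hq) r).differentiable one_ne_zero).differentiableAt.hasDerivAt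

lemma hasDerivAt_comp_along (q : ℝ → Fin (m+k) → ℝ) (hq : ContDiff ℝ 2 q)
    (f : Pt m k → ℝ) (t : ℝ) (hf : DifferentiableAt ℝ f (along m k q t)) :
    HasDerivAt (fun s => f (along m k q s))
      (∑ i : Fin (m+k), qdot q t i * pq f i (along m k q t)
        + ∑ r : Fin m, deriv (fun s => vel m k q s r) t * pv f r (along m k q t)
        + pt f (along m k q t)) t := by
  have h := hf.hasFDerivAt.comp_hasDerivAt t (hasDerivAt_along q hq t)
  have hd := clm_decomp (fderiv ℝ f (along m k q t)) (qdot q t)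
    (fun r => deriv (fun s => vel m k q s r) t) 1
  rw [hd, one_mul] at h
  exact h

lemma hasDerivAt_line {E : Type*} [NormedAddCommGroup E] [NormedSpace ℝ E]
    (y e : E) (s₀ : ℝ) : HasDerivAt (fun s : ℝ => y + s • e) e s₀ := by
  simpa using ((hasDerivAt_id s₀).smul_const e).const_add y

lemma Lstar_pt (L : PtL m k → ℝ) (hL : ContDiff ℝ 2 L)
    (α : Fin k → Pt m k → ℝ) (hα : ∀ ν, ContDiff ℝ 2 (α ν))
    (a : Fin k → Fin m → (Fin (m+k) → ℝ) → ℝ)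
    (hαdef : ∀ (ν : Fin k) (x : Pt m k), α ν x = ∑ r : Fin m, a ν r x.1 * x.2.1 r)
    (hLt : ∀ x : PtL m k, pt L x = 0) (x : Pt m k) :
    pt (Lstar L α) x = 0 := by
  set e : (Fin (m+k) → ℝ) × (Fin m → ℝ) × ℝ := (0, 0, 1) with he
  set eL : (Fin (m+k) → ℝ) × (Fin (m+k) → ℝ) × ℝ := (0, 0, 1) with heL
  have h0 : x + (0:ℝ) • e = x := by simp
  have hg1 : HasDerivAt (fun s : ℝ => Lstar L α (x + s • e))
      (fderiv ℝ (Lstar L α) x e) 0 := by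
    have hdiff : DifferentiableAt ℝ (Lstar L α) (x + (0:ℝ) • e) := by
      rw [h0]
      exact ((Lstar_contDiff L hL α hα).differentiable two_ne_zero).differentiableAt
    have := hdiff.hasFDerivAt.comp_hasDerivAt 0 (hasDerivAt_line x e 0)
    rw [h0] at this
    exact this
  have hfun : (fun s : ℝ => Lstar L α (x + s • e)) = fun s : ℝ => L (Lpt α x + s • eL) := by
    funext s
    have huh : uhat α (x + s • e) = uhat α x := by
      funext i
      induction i using Fin.addCases with
      | left r => simp [uhat, Fin.append_left, he]
      | right ν =>
          simp only [uhat, Fin.append_right]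
          rw [hαdef, hαdef]
          simp [he]
    show L (Lpt α (x + s • e)) = _
    congr 1
    rw [Lpt, Lpt, huh]
    simp only [heL, he]
    refine Prod.ext ?_ (Prod.ext ?_ ?_) <;> simp
  have hg2 : HasDerivAt (fun s : ℝ => L (Lpt α x + s • eL))
      (fderiv ℝ L (Lpt α x) eL) 0 := by
    have h0L : Lpt α x + (0:ℝ) • eL = Lpt α x := by simp
    have hdiff : DifferentiableAt ℝ L (Lpt α x + (0:ℝ) • eL) := by
      rw [h0L]
      exact (hL.differentiable two_ne_zero).differentiableAt
    have := hdiff.hasFDerivAt.comp_hasDerivAt 0 (hasDerivAt_line (Lpt α x) eL 0)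
    rw [h0L] at this
    exact this
  rw [hfun] at hg1
  have := hg1.unique hg2
  rw [pt, ← he, this]
  exact hLt (Lpt α x)

end smooth

section keylemmas
variable {m k : ℕ}

lemma algebra_cancel (v : Fin m → ℝ) (A : Fin (m+k) → Fin m → ℝ)
    (b : Fin k → Fin m → ℝ) (c : Fin k → ℝ)
    (hc : ∀ μ, c μ = ∑ r, b μ r * v r) :
    ∑ r : Fin m, v r * ((∑ r' : Fin m, v r' * A (Fin.castAdd k r') r
        + ∑ μ : Fin k, c μ * A (Fin.natAdd m μ) r)
      - ∑ r' : Fin m, v r' * A (Fin.castAdd k r) r'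
      - ∑ μ : Fin k, b μ r * ∑ r' : Fin m, v r' * A (Fin.natAdd m μ) r') = 0 := by
  have hS13 : (∑ r : Fin m, v r * ∑ r' : Fin m, v r' * A (Fin.castAdd k r') r)
      = ∑ r : Fin m, v r * ∑ r' : Fin m, v r' * A (Fin.castAdd k r) r' := by
    simp only [Finset.mul_sum]
    rw [Finset.sum_comm]
    exact Finset.sum_congr rfl fun r _ => Finset.sum_congr rfl fun r' _ => by ring
  have hS24 : (∑ r : Fin m, v r * ∑ μ : Fin k, c μ * A (Fin.natAdd m μ) r)
      = ∑ r : Fin m, v r * ∑ μ : Fin k, b μ r * ∑ r' : Fin m, v r' * A (Fin.natAdd m μ) r' := by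
    simp only [Finset.mul_sum]
    rw [Finset.sum_comm]
    conv_rhs => rw [Finset.sum_comm]
    refine Finset.sum_congr rfl fun μ _ => ?_
    simp only [hc μ]
    simp only [Finset.sum_mul, Finset.mul_sum]
    rw [Finset.sum_comm]
    exact Finset.sum_congr rfl fun r _ => Finset.sum_congr rfl fun r' _ => by ring
  calc ∑ r : Fin m, v r * ((∑ r' : Fin m, v r' * A (Fin.castAdd k r') r
        + ∑ μ : Fin k, c μ * A (Fin.natAdd m μ) r)
      - ∑ r' : Fin m, v r' * A (Fin.castAdd k r) r'
      - ∑ μ : Fin k, b μ r * ∑ r' : Fin m, v r' * A (Fin.natAdd m μ) r')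
      = (∑ r : Fin m, v r * ∑ r' : Fin m, v r' * A (Fin.castAdd k r') r)
        + (∑ r : Fin m, v r * ∑ μ : Fin k, c μ * A (Fin.natAdd m μ) r)
        - (∑ r : Fin m, v r * ∑ r' : Fin m, v r' * A (Fin.castAdd k r) r')
        - (∑ r : Fin m, v r * ∑ μ : Fin k, b μ r * ∑ r' : Fin m, v r' * A (Fin.natAdd m μ) r') := by
        rw [← Finset.sum_add_distrib, ← Finset.sum_sub_distrib, ← Finset.sum_sub_distrib]
        exact Finset.sum_congr rfl fun r _ => by ring
    _ = 0 := by rw [hS13, hS24]; ring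

lemma algebra_total (v w P pqc Dp : Fin m → ℝ) (pqn αv W : Fin k → ℝ)
    (aa : Fin k → Fin m → ℝ) (Bc : Fin m → Fin k → ℝ)
    (hDp : ∀ r, Dp r = pqc r + ∑ ν, pqn ν * aa ν r + ∑ ν, Bc r ν * W ν)
    (haa : ∀ ν, ∑ r, v r * aa ν r = αv ν)
    (hB : ∀ ν, ∑ r, v r * Bc r ν = 0) :
    ∑ r, (w r * P r + v r * Dp r)
      - ((∑ r, v r * pqc r + ∑ ν, αv ν * pqn ν) + ∑ r, w r * P r + 0) = 0 := by
  have h1 : ∑ r : Fin m, v r * ∑ ν : Fin k, pqn ν * aa ν r = ∑ ν : Fin k, αv ν * pqn ν := by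
    simp only [Finset.mul_sum]
    rw [Finset.sum_comm]
    refine Finset.sum_congr rfl fun ν _ => ?_
    rw [← haa ν, Finset.sum_mul]
    exact Finset.sum_congr rfl fun r _ => by ring
  have h2 : ∑ r : Fin m, v r * ∑ ν : Fin k, Bc r ν * W ν = 0 := by
    simp only [Finset.mul_sum]
    rw [Finset.sum_comm]
    refine Finset.sum_eq_zero fun ν _ => ?_
    have h := hB ν
    calc ∑ r : Fin m, v r * (Bc r ν * W ν) = (∑ r : Fin m, v r * Bc r ν) * W ν := by
          rw [Finset.sum_mul]
          exact Finset.sum_congr rfl fun r _ => by ring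
      _ = 0 := by rw [h, zero_mul]
  have expand : ∑ r, (w r * P r + v r * Dp r)
      = ∑ r, w r * P r + (∑ r, v r * pqc r
        + ∑ r : Fin m, v r * ∑ ν : Fin k, pqn ν * aa ν r
        + ∑ r : Fin m, v r * ∑ ν : Fin k, Bc r ν * W ν) := by
    simp only [hDp]
    rw [← Finset.sum_add_distrib, ← Finset.sum_add_distrib, ← Finset.sum_add_distrib]
    exact Finset.sum_congr rfl fun r _ => by ring
  rw [expand, h1, h2]
  ring

lemma sum_v_Bco (α : Fin k → Pt m k → ℝ)
    (a : Fin k → Fin m → (Fin (m+k) → ℝ) → ℝ) (ha : ∀ ν r, ContDiff ℝ 2 (a ν r))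
    (hαdef : ∀ (ν : Fin k) (x : Pt m k), α ν x = ∑ r : Fin m, a ν r x.1 * x.2.1 r)
    (q : ℝ → Fin (m+k) → ℝ) (hq : ContDiff ℝ 2 q) (hcon : Constrained α q)
    (ν : Fin k) (t : ℝ) :
    ∑ r : Fin m, vel m k q t r * Bco α q r ν t = 0 := by
  set v : Fin m → ℝ := vel m k q t with hv
  set A : Fin (m+k) → Fin m → ℝ := fun i r => fderiv ℝ (a ν r) (q t) (Pi.single i 1) with hA
  have hx1 : (along m k q t).1 = q t := rfl
  have hx2 : (along m k q t).2.1 = v := rfl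
  -- the derivative term
  have hderiv : ∀ r : Fin m, deriv (fun s => pv (α ν) r (along m k q s)) t
      = ∑ r' : Fin m, v r' * A (Fin.castAdd k r') r + ∑ μ : Fin k, α μ (along m k q t) * A (Fin.natAdd m μ) r := by
    intro r
    have hfun : (fun s => pv (α ν) r (along m k q s)) = fun s => a ν r (q s) := by
      funext s
      exact alpha_pv α a ha hαdef ν r (along m k q s)
    have hD : HasDerivAt (fun s => a ν r (q s)) (fderiv ℝ (a ν r) (q t) (qdot q t)) t :=
      (((ha ν r).differentiable two_ne_zero) (q t)).hasFDerivAt.comp_hasDerivAt t (hasDerivAt_q q hq t)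
    rw [hfun, hD.deriv, clm_pi_decomp (fderiv ℝ (a ν r) (q t)) (qdot q t), Fin.sum_univ_add]
    refine congrArg₂ (· + ·) ?_ ?_
    · exact Finset.sum_congr rfl fun r' _ => rfl
    · exact Finset.sum_congr rfl fun μ _ => by rw [hcon t μ]
  have key : ∑ r : Fin m, v r * Bco α q r ν t
      = ∑ r : Fin m, v r * ((∑ r' : Fin m, v r' * A (Fin.castAdd k r') r
          + ∑ μ : Fin k, (α μ (along m k q t)) * A (Fin.natAdd m μ) r)
        - ∑ r' : Fin m, v r' * A (Fin.castAdd k r) r'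
        - ∑ μ : Fin k, a μ r (q t) * ∑ r' : Fin m, v r' * A (Fin.natAdd m μ) r') := by
    refine Finset.sum_congr rfl fun r _ => ?_
    congr 1
    rw [Bco, hderiv r]
    refine congrArg₂ (· - ·) (congrArg₂ (· - ·) rfl ?_) ?_
    · rw [alpha_pq α a ha hαdef ν (Fin.castAdd k r) (along m k q t)]
      rfl
    · refine Finset.sum_congr rfl fun μ _ => ?_
      rw [alpha_pv α a ha hαdef μ r (along m k q t),
        alpha_pq α a ha hαdef ν (Fin.natAdd m μ) (along m k q t)]
      rfl
  rw [key]
  exact algebra_cancel v A (fun μ r => a μ r (q t)) (fun μ => α μ (along m k q t))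
    (fun μ => hαdef μ (along m k q t))

end keylemmas

theorem linear_homogeneous_energy_conservation (m k : ℕ) (hm : 0 < m) (hk : 0 < k)
    (L : PtL m k → ℝ) (hL : ContDiff ℝ 2 L)
    (α : Fin k → Pt m k → ℝ) (hα : ∀ ν, ContDiff ℝ 2 (α ν))
    (a : Fin k → Fin m → (Fin (m+k) → ℝ) → ℝ) (ha : ∀ ν r, ContDiff ℝ 2 (a ν r))
    (hαdef : ∀ (ν : Fin k) (x : Pt m k), α ν x = ∑ r : Fin m, a ν r x.1 * x.2.1 r)
    (hLt : ∀ x : PtL m k, pt L x = 0) :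
    (∀ (ν : Fin k) (x : Pt m k), abar α ν x = α ν x)
    ∧ (∀ (q : ℝ → Fin (m+k) → ℝ), ContDiff ℝ 2 q → Constrained α q → Voronec L α q →
        ∀ t₁ t₂ : ℝ, Estar L α (along m k q t₁) = Estar L α (along m k q t₂)) := by
  constructor
  · intro ν x
    rw [abar, hαdef ν x]
    exact Finset.sum_congr rfl fun r _ => by
      rw [alpha_pv α a ha hαdef]; ring
  · intro q hq hcon hvor t₁ t₂
    have hLstarC2 : ContDiff ℝ 2 (Lstar L α) := Lstar_contDiff L hL α hα
    have key : ∀ t : ℝ, HasDerivAt (fun s => Estar L α (along m k q s)) 0 t := by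
      intro t
      set x := along m k q t with hx
      have halong := hasDerivAt_along q hq t
      have h1 : ∀ r : Fin m, HasDerivAt (fun s => vel m k q s r)
          (deriv (fun s => vel m k q s r) t) t := fun r =>
        ((contDiff_pi.mp (vel_contDiff q hq) r).differentiable one_ne_zero t).hasDerivAt
      have hpvC : ∀ r : Fin m, ContDiff ℝ 1 (pv (Lstar L α) r) := fun r =>
        contDiff_one_fderiv_apply _ hLstarC2 _
      have h2 : ∀ r : Fin m, HasDerivAt (fun s => pv (Lstar L α) r (along m k q s))
          (deriv (fun s => pv (Lstar L α) r (along m k q s)) t) t := fun r =>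
        (DifferentiableAt.comp (g := pv (Lstar L α) r) t (((hpvC r).differentiable one_ne_zero) x) halong.differentiableAt).hasDerivAt
      have hsum : HasDerivAt
          (fun s => ∑ r : Fin m, vel m k q s r * pv (Lstar L α) r (along m k q s))
          (∑ r : Fin m, (deriv (fun s => vel m k q s r) t * pv (Lstar L α) r x
            + vel m k q t r * deriv (fun s => pv (Lstar L α) r (along m k q s)) t)) t :=
        HasDerivAt.fun_sum fun r _ => (h1 r).mul (h2 r)
      have h3 : HasDerivAt (fun s => Lstar L α (along m k q s))
          (∑ i : Fin (m+k), qdot q t i * pq (Lstar L α) i x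
            + ∑ r : Fin m, deriv (fun s => vel m k q s r) t * pv (Lstar L α) r x
            + pt (Lstar L α) x) t :=
        hasDerivAt_comp_along q hq _ t ((hLstarC2.differentiable two_ne_zero) x)
      have htot := hsum.sub h3
      have hDp : ∀ r : Fin m, deriv (fun s => pv (Lstar L α) r (along m k q s)) t
          = pq (Lstar L α) (Fin.castAdd k r) x
            + ∑ ν : Fin k, pq (Lstar L α) (Fin.natAdd m ν) x * a ν r x.1
            + ∑ ν : Fin k, Bco α q r ν t * pv L (Fin.natAdd m ν) (Lpt α x) := by
        intro r
        have h := hvor r t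
        rw [← hx] at h
        simp only [alpha_pv α a ha hαdef] at h
        linarith
      have haa : ∀ ν : Fin k, ∑ r : Fin m, vel m k q t r * a ν r x.1 = α ν x := fun ν => by
        rw [hαdef ν x]
        exact Finset.sum_congr rfl fun r _ => by rw [mul_comm]; rfl
      have hB : ∀ ν : Fin k, ∑ r : Fin m, vel m k q t r * Bco α q r ν t = 0 := fun ν =>
        sum_v_Bco α a ha hαdef q hq hcon ν t
      have hval : (∑ r : Fin m, (deriv (fun s => vel m k q s r) t * pv (Lstar L α) r x
            + vel m k q t r * deriv (fun s => pv (Lstar L α) r (along m k q s)) t))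
          - (∑ i : Fin (m+k), qdot q t i * pq (Lstar L α) i x
            + ∑ r : Fin m, deriv (fun s => vel m k q s r) t * pv (Lstar L α) r x
            + pt (Lstar L α) x) = 0 := by
        rw [Lstar_pt L hL α hα a hαdef hLt x]
        rw [Fin.sum_univ_add (f := fun i => qdot q t i * pq (Lstar L α) i x)]
        have hnat : ∑ ν : Fin k, qdot q t (Fin.natAdd m ν) * pq (Lstar L α) (Fin.natAdd m ν) x
            = ∑ ν : Fin k, α ν x * pq (Lstar L α) (Fin.natAdd m ν) x :=
          Finset.sum_congr rfl fun ν _ => by rw [hcon t ν, ← hx]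
        have hcast : ∑ r : Fin m, qdot q t (Fin.castAdd k r) * pq (Lstar L α) (Fin.castAdd k r) x
            = ∑ r : Fin m, vel m k q t r * pq (Lstar L α) (Fin.castAdd k r) x := rfl
        rw [hnat, hcast]
        exact algebra_total (vel m k q t) (fun r => deriv (fun s => vel m k q s r) t)
          (fun r => pv (Lstar L α) r x) (fun r => pq (Lstar L α) (Fin.castAdd k r) x)
          (fun r => deriv (fun s => pv (Lstar L α) r (along m k q s)) t)
          (fun ν => pq (Lstar L α) (Fin.natAdd m ν) x) (fun ν => α ν x)
          (fun ν => pv L (Fin.natAdd m ν) (Lpt α x))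
          (fun ν r => a ν r x.1) (fun r ν => Bco α q r ν t)
          hDp haa hB
      exact hval ▸ htot
    exact is_const_of_deriv_eq_zero (fun s => (key s).differentiableAt)
      (fun s => (key s).deriv) t₁ t₂

end NH
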